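/- For a disconnected line $l = (n,m)$ (i.e., $x_l = 0$) in a network where the remaining closed lines contain a path $P$ from $n$ to $m$, the dummy flow satisfies $|\tilde f_l| = b_l |\theta_n - \theta_m| \le b_l \sum_{j \in P} \overline F_j / b_j$, where $\overline F_j = \max(\overline f_j, -\underline f_j)$. Hence $M_l := b_l \cdot \max_{P} \sum_{j \in P} \overline F_j/b_j$ over paths $P$ of potentially closed lines is a valid big-M bound for line $l$. -/

import Mathlib

lemma fin_telescope_sum : ∀ (K : ℕ) (g : Fin (K + 1) → ℝ),
    ∑ i : Fin K, (g i.castSucc - g i.succ) = g 0 - g (Fin.last K) := by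
  intro K
  induction K with
  | zero => intro g; simp
  | succ K ih =>
    intro g
    rw [Fin.sum_univ_castSucc]
    have h1 : ∀ i : Fin K, g i.castSucc.castSucc - g i.castSucc.succ =
        (fun j : Fin (K + 1) => g j.castSucc) i.castSucc
          - (fun j : Fin (K + 1) => g j.castSucc) i.succ := by
      intro i; rfl
    simp only [h1]
    rw [ih (fun j : Fin (K + 1) => g j.castSucc)]
    have h2 : (Fin.last K).succ = Fin.last (K + 1) := rfl
    have h3 : ((0 : Fin (K+1)).castSucc) = (0 : Fin (K+2)) := rfl
    simp [h2]

/-- For an open line `l = (n, m)` whose endpoints are joined by a path of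
closed lines with flow magnitudes bounded by `F̄_j`, the dummy flow satisfies
`|f̃_l| = b_l |θ_n - θ_m| ≤ b_l ∑_j F̄_j / b_j`, so this quantity is a valid
big-M bound. -/
theorem open_line_dummy_flow_bound {V : Type*}
    (θ : V → ℝ) (K : ℕ) (v : Fin (K + 1) → V)
    (b f Fhi : Fin K → ℝ)
    (hb : ∀ i, 0 < b i)
    (hflow : ∀ i, f i = b i * (θ (v i.castSucc) - θ (v i.succ)))
    (hbound : ∀ i, |f i| ≤ Fhi i)
    (bl ftl : ℝ) (hbl : 0 < bl)
    (hftl : ftl = bl * (θ (v 0) - θ (v (Fin.last K)))) :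
    |ftl| ≤ bl * ∑ i, Fhi i / b i := by
  have key : θ (v 0) - θ (v (Fin.last K)) = ∑ i : Fin K, (θ (v i.castSucc) - θ (v i.succ)) :=
    (fin_telescope_sum K (fun i => θ (v i))).symm
  rw [hftl, key, abs_mul, abs_of_pos hbl]
  gcongr
  calc |∑ i : Fin K, (θ (v i.castSucc) - θ (v i.succ))| ≤ ∑ i : Fin K, |θ (v i.castSucc) - θ (v i.succ)| :=
        Finset.abs_sum_le_sum_abs _ _
    _ ≤ ∑ i : Fin K, Fhi i / b i := by
        apply Finset.sum_le_sum
        intro i _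
        rw [div_eq_inv_mul]
        have : (b i)⁻¹ * f i = θ (v i.castSucc) - θ (v i.succ) := by
          rw [hflow i, inv_mul_cancel_left₀ (hb i).ne']
        calc |θ (v i.castSucc) - θ (v i.succ)| = |(b i)⁻¹ * f i| := by rw [this]
          _ = |(b i)⁻¹| * |f i| := abs_mul _ _
          _ ≤ |(b i)⁻¹| * Fhi i := by gcongr; exact hbound i
          _ = (b i)⁻¹ * Fhi i := by rw [abs_of_pos (inv_pos.2 (hb i))]
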